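/- Let (L₁, L₂, P, (⊛ᵢ, ↙ⁱ, ↖ᵢ)_{i∈I}) be a multi-adjoint property-oriented frame and (X, Y, φ, τ) a context of this frame. Define φ* : (Y → L₂) → (X → L₁) by (φ* λ)(x) = ⨆_{y∈Y} φ(x,y) ⊛_{τ(y)} λ(y), and φ_* : (X → L₁) → (Y → L₂) by (φ_* μ)(y) = ⨅_{x∈X} μ(x) ↖_{τ(y)} φ(x,y). Then (φ*, φ_*) is a (covariant) Galois connection: for all λ : Y → L₂ and μ : X → L₁, φ* λ ≤ μ (pointwise in L₁) if and only if λ ≤ φ_* μ (pointwise in L₂). -/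
import Mathlib


/-- For a context of a multi-adjoint property-oriented frame, the
operators `φ*` and `φ_*` form a (covariant) Galois connection. -/
theorem stmt_10 {L₁ L₂ P : Type*} [CompleteLattice L₁] [CompleteLattice L₂]
    [CompleteLattice P] {I : Type*}
    (w : I → P → L₂ → L₁) (ld : I → L₁ → L₂ → P) (lu : I → L₁ → P → L₂)
    (adj : ∀ (i : I) (z : P) (y : L₂) (x : L₁),
      (w i z y ≤ x ↔ z ≤ ld i x y) ∧ (w i z y ≤ x ↔ y ≤ lu i x z))
    {X Y : Type*} (φ : X → Y → P) (τ : Y → I)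
    (star : (Y → L₂) → X → L₁) (lstar : (X → L₁) → Y → L₂)
    (hstar : ∀ (lam : Y → L₂) (x : X), star lam x = ⨆ y, w (τ y) (φ x y) (lam y))
    (hlstar : ∀ (μ : X → L₁) (y : Y), lstar μ y = ⨅ x, lu (τ y) (μ x) (φ x y)) :
    ∀ (lam : Y → L₂) (μ : X → L₁), star lam ≤ μ ↔ lam ≤ lstar μ := by
  intro lam μ
  constructor
  · intro h y
    rw [hlstar]
    refine le_iInf fun x => ?_
    rw [← (adj (τ y) (φ x y) (lam y) (μ x)).2]
    calc w (τ y) (φ x y) (lam y) ≤ star lam x := by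
          rw [hstar]; exact le_iSup (fun y => w (τ y) (φ x y) (lam y)) y
      _ ≤ μ x := h x
  · intro h x
    rw [hstar]
    refine iSup_le fun y => ?_
    rw [(adj (τ y) (φ x y) (lam y) (μ x)).2]
    exact le_trans (h y) (by rw [hlstar]; exact iInf_le _ x)
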